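/- (Probabilistic correctness of the intersection operation.) Let v, w : Fin N → ℝ≥0 be weighted sets, let i ∈ Fin N, and suppose N_W > 2 · |supp(v) ∪ supp(w)|. If the family H = (h_1,…,h_{N_D}) is drawn uniformly at random in the random-hash model, then the probability that CM_H(i, S_H(v) ⊙ S_H(w)) ≠ v i · w i is at most 1 / 2^{N_D}. -/

import Mathlib

open Finset

/-- The primitive sketch of a weighted set `v` under hash function `h`. -/
def sketch {N NW : ℕ} (h : Fin N → Fin NW) (v : Fin N → NNReal) : Fin NW → NNReal :=
  fun k => ∑ i ∈ Finset.univ.filter (fun i => h i = k), v i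

/-- The support of a weighted set, as a finset. -/
noncomputable def supp {N : ℕ} (v : Fin N → NNReal) : Finset (Fin N) :=
  Finset.univ.filter (fun i => v i ≠ 0)

/-- The count-min sketch of `v` under the family `H`: the `j`-th row is the
primitive sketch of `v` under `H j`. -/
def cmSketch {N NW ND : ℕ} (H : Fin ND → Fin N → Fin NW) (v : Fin N → NNReal) :
    Fin ND → Fin NW → NNReal :=
  fun j => sketch (H j) v

/-- The count-min lookup of `i` in an `ND × NW` matrix `M`, relative to the
family `H`: the minimum over `j` of `M[j, h_j(i)]`. -/
noncomputable def cmLookup {N NW ND : ℕ} (H : Fin ND → Fin N → Fin NW)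
    (M : Fin ND → Fin NW → NNReal) (i : Fin N) : NNReal :=
  ⨅ j, M j (H j i)

/-- Probabilistic correctness of the intersection operation: if
`NW > 2 * |supp v ∪ supp w|` and the family `H` is drawn uniformly at random,
the probability that `CM_H(i, S_H(v) ⊙ S_H(w)) ≠ v i * w i` is at most
`1 / 2 ^ ND`. -/
theorem prob_cmLookup_hadamard_err_le
    {N NW ND : ℕ} (hN : 0 < N) (hNW : 0 < NW) (hND : 0 < ND)
    (v w : Fin N → NNReal) (i : Fin N)
    (hW : 2 * (supp v ∪ supp w).card < NW) :
    ((Finset.univ.filter (fun H : Fin ND → Fin N → Fin NW =>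
        cmLookup H (cmSketch H v * cmSketch H w) i ≠ v i * w i)).card : ℝ)
      / (Fintype.card (Fin ND → Fin N → Fin NW) : ℝ)
      ≤ 1 / 2 ^ ND := by
  classical
  have hNDne : Nonempty (Fin ND) := ⟨⟨0, hND⟩⟩
  set S : Finset (Fin N) := (supp v ∪ supp w).erase i with hSdef
  -- Step A: error implies every row has a collision with S
  have key : ∀ H : Fin ND → Fin N → Fin NW,
      cmLookup H (cmSketch H v * cmSketch H w) i ≠ v i * w i →
      ∀ j, ∃ i' ∈ S, H j i' = H j i := by
    intro H hne j
    by_contra hc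
    push_neg at hc
    apply hne
    -- lower bound: every entry is ≥ v i * w i
    have hlow : v i * w i ≤ cmLookup H (cmSketch H v * cmSketch H w) i := by
      apply le_ciInf
      intro j'
      have h1 : v i ≤ sketch (H j') v (H j' i) := by
        apply Finset.single_le_sum (f := v) (fun _ _ => zero_le)
        simp
      have h2 : w i ≤ sketch (H j') w (H j' i) := by
        apply Finset.single_le_sum (f := w) (fun _ _ => zero_le)
        simp
      exact mul_le_mul' h1 h2
    -- upper bound via the good row j
    have hv : sketch (H j) v (H j i) = v i := by
      apply Finset.sum_eq_single_of_mem
      · simp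
      · intro b hb hbne
        simp only [Finset.mem_filter] at hb
        by_contra hvb
        exact hc b (by simp [hSdef, supp, hbne, hvb]) hb.2
    have hw : sketch (H j) w (H j i) = w i := by
      apply Finset.sum_eq_single_of_mem
      · simp
      · intro b hb hbne
        simp only [Finset.mem_filter] at hb
        by_contra hwb
        exact hc b (by simp [hSdef, supp, hbne, hwb]) hb.2
    have hup : cmLookup H (cmSketch H v * cmSketch H w) i ≤ v i * w i := by
      have := ciInf_le (f := fun j' => (cmSketch H v * cmSketch H w) j' (H j' i))
        (OrderBot.bddBelow _) j
      simpa [cmLookup, cmSketch, Pi.mul_apply, hv, hw] using this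
    exact le_antisymm hup hlow
  -- bad single-hash set
  set Bad : Finset (Fin N → Fin NW) :=
    Finset.univ.filter (fun h => ∃ i' ∈ S, h i' = h i) with hBdef
  -- Step B: error families sit inside the product of Bad
  have sub : (Finset.univ.filter (fun H : Fin ND → Fin N → Fin NW =>
      cmLookup H (cmSketch H v * cmSketch H w) i ≠ v i * w i)) ⊆
      Fintype.piFinset (fun _ : Fin ND => Bad) := by
    intro H hH
    simp only [Finset.mem_filter, Finset.mem_univ, true_and] at hH
    rw [Fintype.mem_piFinset]
    intro j
    simp only [hBdef, Finset.mem_filter, Finset.mem_univ, true_and]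
    exact key H hH j
  set R := Fintype.card ({j : Fin N // j ≠ i} → Fin NW) with hRdef
  -- Step C: Bad.card ≤ S.card * R
  have hBadcard : Bad.card ≤ S.card * R := by
    have := Finset.card_le_card_of_injOn
      (f := fun h : Fin N → Fin NW =>
        (if hb : ∃ i' ∈ S, h i' = h i then hb.choose else i,
          fun j : {j : Fin N // j ≠ i} => h j.1))
      (s := Bad) (t := S ×ˢ (Finset.univ : Finset ({j : Fin N // j ≠ i} → Fin NW)))
      (by
        intro h hh
        simp only [Finset.mem_coe, hBdef, Finset.mem_filter, Finset.mem_univ, true_and] at hh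
        dsimp only
        rw [dif_pos hh]
        simp [Finset.mem_product, hh.choose_spec.1])
      (by
        intro h1 hh1 h2 hh2 heq
        simp only [Finset.mem_coe, hBdef, Finset.mem_filter, Finset.mem_univ, true_and] at hh1 hh2
        dsimp only at heq
        rw [dif_pos hh1, dif_pos hh2, Prod.mk.injEq] at heq
        obtain ⟨hc, hg⟩ := heq
        funext x
        by_cases hx : x = i
        · subst hx
          have hne1 : hh1.choose ≠ x := Finset.ne_of_mem_erase hh1.choose_spec.1
          have hne2 : hh2.choose ≠ x := Finset.ne_of_mem_erase hh2.choose_spec.1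
          have e1 : h1 x = h1 hh1.choose := hh1.choose_spec.2.symm
          have e2 : h2 x = h2 hh2.choose := hh2.choose_spec.2.symm
          have := congrFun hg ⟨hh1.choose, hne1⟩
          rw [e1, e2, ← hc]
          exact this
        · exact congrFun hg ⟨x, hx⟩)
    rwa [Finset.card_product, Finset.card_univ] at this
  -- Step D: NW ^ N = NW * R
  have hsplit : NW ^ N = NW * R := by
    have := Fintype.card_congr (Equiv.funSplitAt i (Fin NW))
    simpa [hRdef, Fintype.card_fun] using this
  -- S.card bound
  have hScard : 2 * S.card ≤ NW :=
    le_of_lt (lt_of_le_of_lt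
      (Nat.mul_le_mul_left 2 (Finset.card_le_card (Finset.erase_subset _ _))) hW)
  -- total count
  have hT : Fintype.card (Fin ND → Fin N → Fin NW) = (NW * R) ^ ND := by
    rw [Fintype.card_fun, Fintype.card_fun, Fintype.card_fin, Fintype.card_fin,
      Fintype.card_fin, hsplit]
  -- Nat inequality
  have hnat : (Finset.univ.filter (fun H : Fin ND → Fin N → Fin NW =>
      cmLookup H (cmSketch H v * cmSketch H w) i ≠ v i * w i)).card * 2 ^ ND ≤
      Fintype.card (Fin ND → Fin N → Fin NW) := by
    calc _ ≤ (Fintype.piFinset (fun _ : Fin ND => Bad)).card * 2 ^ ND :=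
          Nat.mul_le_mul_right _ (Finset.card_le_card sub)
      _ = Bad.card ^ ND * 2 ^ ND := by
          rw [Fintype.card_piFinset]; simp
      _ ≤ (S.card * R) ^ ND * 2 ^ ND :=
          Nat.mul_le_mul_right _ (Nat.pow_le_pow_left hBadcard ND)
      _ = (2 * S.card * R) ^ ND := by
          rw [← Nat.mul_pow]; ring_nf
      _ ≤ (NW * R) ^ ND :=
          Nat.pow_le_pow_left (Nat.mul_le_mul_right _ hScard) ND
      _ = _ := hT.symm
  -- conclude over ℝ
  have hTpos : (0 : ℝ) < (Fintype.card (Fin ND → Fin N → Fin NW) : ℝ) := by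
    have : Nonempty (Fin ND → Fin N → Fin NW) := ⟨fun _ _ => ⟨0, hNW⟩⟩
    exact_mod_cast Fintype.card_pos
  rw [div_le_div_iff₀ hTpos (by positivity)]
  calc ((Finset.univ.filter (fun H : Fin ND → Fin N → Fin NW =>
      cmLookup H (cmSketch H v * cmSketch H w) i ≠ v i * w i)).card : ℝ) * 2 ^ ND
      = (((Finset.univ.filter (fun H : Fin ND → Fin N → Fin NW =>
        cmLookup H (cmSketch H v * cmSketch H w) i ≠ v i * w i)).card * 2 ^ ND : ℕ) : ℝ) := by
        push_cast; ring
    _ ≤ ((Fintype.card (Fin ND → Fin N → Fin NW) : ℕ) : ℝ) := by exact_mod_cast hnat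
    _ = 1 * (Fintype.card (Fin ND → Fin N → Fin NW) : ℝ) := by ring
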